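/- For all r-dimensional subspaces V, V' and all (d−r)-dimensional subspaces W of R^d, |∠(V,W) − ∠(V',W)| ≤ 2r·d_H(V,V'). -/

import Mathlib

open scoped RealInnerProductSpace

noncomputable section

abbrev Euc (d : ℕ) := EuclideanSpace ℝ (Fin d)

/-- Norm of the wedge product of a family of vectors (square root of Gram determinant). -/
def wnorm {d : ℕ} {ι : Type*} [Fintype ι] [DecidableEq ι] (x : ι → Euc d) : ℝ :=
  Real.sqrt (Matrix.of fun i j => ⟪x i, x j⟫).det

namespace Wedge

variable {d : ℕ} {ι κ : Type*} [Fintype ι] [DecidableEq ι] [Fintype κ] [DecidableEq κ]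

def gram (x : ι → Euc d) : Matrix ι ι ℝ := Matrix.of fun i j => ⟪x i, x j⟫

lemma wnorm_eq (x : ι → Euc d) : wnorm x = Real.sqrt (gram x).det := rfl

lemma gram_dot (x : ι → Euc d) (c : ι → ℝ) :
    dotProduct c (Matrix.mulVec (gram x) c) = ‖∑ i, c i • x i‖ ^ 2 := by
  rw [← real_inner_self_eq_norm_sq]
  simp only [sum_inner, inner_sum, real_inner_smul_left, real_inner_smul_right,
    dotProduct, Matrix.mulVec, gram, Matrix.of_apply, Finset.mul_sum]
  refine Finset.sum_congr rfl fun a _ => Finset.sum_congr rfl fun b _ => ?_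
  rw [real_inner_comm]; ring

lemma gram_posSemidef (x : ι → Euc d) : (gram x).PosSemidef := by
  refine Matrix.posSemidef_iff_dotProduct_mulVec.mpr ⟨Matrix.IsHermitian.ext fun i j => ?_, fun c => ?_⟩
  · simpa [gram] using real_inner_comm (x i) (x j)
  · rw [show (star c : ι → ℝ) = c from rfl, gram_dot]
    positivity

lemma gram_det_nonneg (x : ι → Euc d) : 0 ≤ (gram x).det := by
  have h := gram_posSemidef x
  rw [h.isHermitian.det_eq_prod_eigenvalues]
  have := fun i => h.eigenvalues_nonneg i
  push_cast
  exact Finset.prod_nonneg fun i _ => this i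

lemma wnorm_nonneg (x : ι → Euc d) : 0 ≤ wnorm x := Real.sqrt_nonneg _

lemma wnorm_sq (x : ι → Euc d) : wnorm x ^ 2 = (gram x).det := by
  rw [wnorm_eq, Real.sq_sqrt (gram_det_nonneg x)]

lemma wnorm_comp_equiv (e : κ ≃ ι) (x : ι → Euc d) : wnorm (x ∘ e) = wnorm x := by
  rw [wnorm_eq, wnorm_eq]
  congr 1
  rw [show gram (x ∘ e) = (gram x).submatrix e e from rfl,
    Matrix.det_submatrix_equiv_self]

lemma gram_map (A : Matrix ι ι ℝ) (x : ι → Euc d) :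
    gram (fun i => ∑ k, A i k • x k) = A * gram x * A.transpose := by
  ext i j
  simp only [gram, Matrix.of_apply, sum_inner, inner_sum, real_inner_smul_left,
    real_inner_smul_right, Matrix.mul_apply, Matrix.transpose_apply, Finset.sum_mul,
    Finset.mul_sum]
  refine Finset.sum_congr rfl fun a _ => Finset.sum_congr rfl fun b _ => ?_
  ring

lemma wnorm_map (A : Matrix ι ι ℝ) (x : ι → Euc d) :
    wnorm (fun i => ∑ k, A i k • x k) = |A.det| * wnorm x := by
  rw [wnorm_eq, wnorm_eq, gram_map, Matrix.det_mul, Matrix.det_mul, Matrix.det_transpose,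
    show A.det * (gram x).det * A.det = A.det ^ 2 * (gram x).det by ring,
    Real.sqrt_mul (sq_nonneg _), Real.sqrt_sq_eq_abs]

end Wedge

section ChunkB
variable {d : ℕ} {ι κ : Type*} [Fintype ι] [DecidableEq ι] [Fintype κ] [DecidableEq κ]
open Submodule Metric Set

lemma infDist_orth (U : Submodule ℝ (Euc d)) (a : Euc d) :
    Metric.infDist a (U : Set (Euc d)) = ‖a - orthogonalProjection U a‖ := by
  rw [Metric.infDist_eq_iInf, show ‖a - (orthogonalProjection U a : Euc d)‖ = ‖a - U.starProjection a‖ from rfl,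
    starProjection_minimal]
  exact iInf_congr fun y => dist_eq_norm a y

lemma wnorm_empty [IsEmpty ι] (x : ι → Euc d) : wnorm x = 1 := by
  rw [Wedge.wnorm_eq, Matrix.det_isEmpty, Real.sqrt_one]

lemma wnorm_elim_isEmpty [IsEmpty κ] (x : ι → Euc d) (y : κ → Euc d) :
    wnorm (Sum.elim x y) = wnorm x := by
  have h : Sum.elim x y ∘ (Equiv.sumEmpty ι κ).symm = x := by
    funext i; simp
  rw [← Wedge.wnorm_comp_equiv (Equiv.sumEmpty ι κ).symm (Sum.elim x y), h]

lemma wnorm_orthonormal {e : ι → Euc d} (he : Orthonormal ℝ e) : wnorm e = 1 := by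
  have : Wedge.gram (d := d) e = 1 := by
    ext i j
    rw [Wedge.gram, Matrix.of_apply, orthonormal_iff_ite.mp he, Matrix.one_apply]
  rw [Wedge.wnorm_eq, this, Matrix.det_one, Real.sqrt_one]

lemma wnorm_elim_single (x : ι → Euc d) (a : Euc d) :
    wnorm (Sum.elim x fun _ : Fin 1 => a) =
      wnorm x * Metric.infDist a (Submodule.span ℝ (Set.range x) : Set (Euc d)) := by
  set U := Submodule.span ℝ (Set.range x) with hU
  set p : Euc d := (orthogonalProjection U a : Euc d) with hp
  set h : Euc d := a - p with hh
  have hpU : p ∈ U := (orthogonalProjection U a).2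
  obtain ⟨c, hc⟩ := (mem_span_range_iff_exists_fun ℝ).mp hpU
  have horth : ∀ u ∈ U, ⟪u, h⟫ = 0 := fun u hu =>
    (Submodule.mem_orthogonal U h).mp (sub_starProjection_mem_orthogonal a) u hu
  have hxo : ∀ i, ⟪x i, h⟫ = 0 := fun i =>
    horth _ (Submodule.subset_span (Set.mem_range_self i))
  set A : Matrix (ι ⊕ Fin 1) (ι ⊕ Fin 1) ℝ :=
    Matrix.fromBlocks 1 0 (Matrix.of fun (_ : Fin 1) i => -(c i)) 1 with hA
  have key1 : (fun j => ∑ k, A j k • (Sum.elim x fun _ : Fin 1 => a) k) =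
      Sum.elim x fun _ : Fin 1 => h := by
    funext j
    rcases j with i | j
    · simp [hA, Fintype.sum_sum_type, Matrix.one_apply, ite_smul, Finset.sum_ite_eq]
    · simp only [hA, Fintype.sum_sum_type, Sum.elim_inl, Sum.elim_inr,
        Matrix.fromBlocks_apply₂₁, Matrix.fromBlocks_apply₂₂, Matrix.of_apply,
        Matrix.one_apply, Finset.univ_unique, Finset.sum_singleton]
      rw [if_pos (Subsingleton.elim j default), one_smul, hh, ← hc]
      simp only [neg_smul, Finset.sum_neg_distrib]
      abel
  have key2 : wnorm (Sum.elim x fun _ : Fin 1 => a) = wnorm (Sum.elim x fun _ : Fin 1 => h) := by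
    have hdet : A.det = 1 := by
      rw [hA, Matrix.det_fromBlocks_zero₁₂, Matrix.det_one, Matrix.det_one, one_mul]
    have hm := Wedge.wnorm_map A (Sum.elim x fun _ : Fin 1 => a)
    rw [key1, hdet] at hm
    rw [hm]; simp
  have key3 : Wedge.gram (Sum.elim x fun _ : Fin 1 => h) =
      Matrix.fromBlocks (Wedge.gram x) 0 0 (Matrix.of fun _ _ => ‖h‖ ^ 2) := by
    ext i j
    rcases i with i | i <;> rcases j with j | j
    · rfl
    · simpa [Wedge.gram, Matrix.fromBlocks] using hxo i
    · simp only [Wedge.gram, Matrix.of_apply, Sum.elim_inl, Sum.elim_inr,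
        Matrix.fromBlocks_apply₂₁, Matrix.zero_apply]
      rw [real_inner_comm]; exact hxo j
    · simp only [Wedge.gram, Matrix.of_apply, Sum.elim_inr, Matrix.fromBlocks_apply₂₂]
      exact real_inner_self_eq_norm_sq h
  have key4 : wnorm (Sum.elim x fun _ : Fin 1 => h) = wnorm x * ‖h‖ := by
    rw [Wedge.wnorm_eq, key3, Matrix.det_fromBlocks_zero₁₂, Matrix.det_fin_one,
      Real.sqrt_mul (Wedge.gram_det_nonneg x), Matrix.of_apply, Real.sqrt_sq (norm_nonneg h)]
    rfl
  rw [key2, key4, infDist_orth U a, ← hp, ← hh]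
end ChunkB

section ChunkC
variable {d : ℕ} {ι κ : Type*} [Fintype ι] [DecidableEq ι] [Fintype κ] [DecidableEq κ]
open Submodule Metric Set

lemma wnorm_fin_snoc {m : ℕ} (y : Fin m → Euc d) (a : Euc d) :
    wnorm (Fin.snoc y a) = wnorm y * Metric.infDist a (span ℝ (range y) : Set (Euc d)) := by
  have hcomp : (Fin.snoc y a : Fin (m+1) → Euc d) ∘ finSumFinEquiv = Sum.elim y fun _ : Fin 1 => a := by
    funext j
    rcases j with i | k
    · have : Fin.castAdd 1 i = Fin.castSucc i := rfl
      simp [finSumFinEquiv, this, Fin.snoc_castSucc]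
    · simp only [Function.comp_apply, finSumFinEquiv, Equiv.coe_fn_mk, Sum.elim_inr]
      have : Fin.natAdd m k = Fin.last m := by
        ext; simp [Fin.ext_iff, Subsingleton.elim k 0]
      rw [this, Fin.snoc_last]
  rw [← Wedge.wnorm_comp_equiv finSumFinEquiv (Fin.snoc y a), hcomp, wnorm_elim_single]

lemma wnorm_elim_snoc {m : ℕ} (x : ι → Euc d) (y : Fin m → Euc d) (a : Euc d) :
    wnorm (Sum.elim x (Fin.snoc y a)) = wnorm (Sum.elim x y) *
      Metric.infDist a (span ℝ (range (Sum.elim x y)) : Set (Euc d)) := by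
  set e : (ι ⊕ Fin m) ⊕ Fin 1 ≃ ι ⊕ Fin (m+1) :=
    (Equiv.sumAssoc ι (Fin m) (Fin 1)).trans ((Equiv.refl ι).sumCongr finSumFinEquiv) with he
  have hcomp : (Sum.elim x (Fin.snoc y a)) ∘ e = Sum.elim (Sum.elim x y) fun _ : Fin 1 => a := by
    funext j
    rcases j with (i | j) | k
    · simp [he, Equiv.sumAssoc]
    · have : Fin.castAdd 1 j = Fin.castSucc j := rfl
      simp [he, Equiv.sumAssoc, finSumFinEquiv, this, Fin.snoc_castSucc]
    · simp only [he, Function.comp_apply, Equiv.trans_apply, Equiv.sumAssoc_apply_inr,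
        Equiv.sumCongr_apply, Sum.map_inr, Sum.elim_inr]
      have : finSumFinEquiv (Sum.inr k) = Fin.last m := by
        ext; simp [finSumFinEquiv, Fin.ext_iff, Subsingleton.elim k 0]
      rw [this, Fin.snoc_last]
  rw [← Wedge.wnorm_comp_equiv e (Sum.elim x (Fin.snoc y a)), hcomp, wnorm_elim_single]

lemma span_elim_subset (x : ι → Euc d) (y : κ → Euc d) :
    (span ℝ (range y) : Set (Euc d)) ⊆ (span ℝ (range (Sum.elim x y)) : Set (Euc d)) := by
  apply Submodule.span_mono
  rw [← Sum.elim_comp_inr x y]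
  exact Set.range_comp_subset_range _ _

lemma wnorm_elim_le {m : ℕ} (x : ι → Euc d) (y : Fin m → Euc d) :
    wnorm (Sum.elim x y) ≤ wnorm x * wnorm y := by
  induction m with
  | zero => rw [wnorm_elim_isEmpty, wnorm_empty y, mul_one]
  | succ m ih =>
    have key1 : wnorm (Sum.elim x y) = wnorm (Sum.elim x (Fin.init y)) *
        Metric.infDist (y (Fin.last m)) (span ℝ (range (Sum.elim x (Fin.init y))) : Set (Euc d)) := by
      conv_lhs => rw [← Fin.snoc_init_self y]
      rw [wnorm_elim_snoc]
    have key2 : wnorm y = wnorm (Fin.init y) *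
        Metric.infDist (y (Fin.last m)) (span ℝ (range (Fin.init y)) : Set (Euc d)) := by
      conv_lhs => rw [← Fin.snoc_init_self y]
      rw [wnorm_fin_snoc]
    rw [key1, key2, ← mul_assoc]
    have h1 := ih (Fin.init y)
    have h2 : Metric.infDist (y (Fin.last m)) (span ℝ (range (Sum.elim x (Fin.init y))) : Set (Euc d)) ≤
        Metric.infDist (y (Fin.last m)) (span ℝ (range (Fin.init y)) : Set (Euc d)) :=
      Metric.infDist_le_infDist_of_subset (span_elim_subset x (Fin.init y))
        ⟨0, Submodule.zero_mem _⟩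
    exact mul_le_mul h1 h2 Metric.infDist_nonneg
      (mul_nonneg (Wedge.wnorm_nonneg x) (Wedge.wnorm_nonneg (Fin.init y)))

lemma wnorm_fin_le_prod {m : ℕ} (y : Fin m → Euc d) : wnorm y ≤ ∏ i, ‖y i‖ := by
  induction m with
  | zero => rw [wnorm_empty y]; simp
  | succ m ih =>
    have key2 : wnorm y = wnorm (Fin.init y) *
        Metric.infDist (y (Fin.last m)) (span ℝ (range (Fin.init y)) : Set (Euc d)) := by
      conv_lhs => rw [← Fin.snoc_init_self y]
      rw [wnorm_fin_snoc]
    rw [key2, Fin.prod_univ_castSucc]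
    have h2 : Metric.infDist (y (Fin.last m)) (span ℝ (range (Fin.init y)) : Set (Euc d)) ≤
        ‖y (Fin.last m)‖ := by
      have := Metric.infDist_le_dist_of_mem (x := y (Fin.last m))
        (Submodule.zero_mem (span ℝ (range (Fin.init y))))
      rwa [dist_zero_right] at this
    have h1 : wnorm (Fin.init y) ≤ ∏ i : Fin m, ‖y i.castSucc‖ := ih (Fin.init y)
    exact mul_le_mul h1 h2 Metric.infDist_nonneg
      (Finset.prod_nonneg fun i _ => norm_nonneg _)

lemma wnorm_le_prod (x : ι → Euc d) : wnorm x ≤ ∏ i, ‖x i‖ := by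
  set e := Fintype.equivFin ι with he
  have h1 : (x ∘ e.symm) ∘ e = x := by funext i; simp
  calc wnorm x = wnorm (x ∘ e.symm) := by rw [← Wedge.wnorm_comp_equiv e (x ∘ e.symm), h1]
    _ ≤ ∏ i, ‖(x ∘ e.symm) i‖ := wnorm_fin_le_prod _
    _ = ∏ i, ‖x i‖ := Fintype.prod_equiv e.symm _ _ fun i => rfl

end ChunkC

section ChunkD
variable {d : ℕ} {ι : Type*} [Fintype ι] [DecidableEq ι]
open Submodule Metric Set

def eraseEquiv {m : ℕ} (i : ι) : ({j : ι // j ≠ i} ⊕ Fin m) ⊕ Fin 1 ≃ ι ⊕ Fin m where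
  toFun s := match s with
    | Sum.inl (Sum.inl j) => Sum.inl j.1
    | Sum.inl (Sum.inr k) => Sum.inr k
    | Sum.inr _ => Sum.inl i
  invFun s := match s with
    | Sum.inl j => if h : j = i then Sum.inr 0 else Sum.inl (Sum.inl ⟨j, h⟩)
    | Sum.inr k => Sum.inl (Sum.inr k)
  left_inv s := by
    rcases s with (⟨j, hj⟩ | k) | u
    · simp [dif_neg hj]
    · simp
    · simp [Subsingleton.elim u 0]
  right_inv s := by
    rcases s with j | k
    · by_cases h : j = i
      · subst h; simp
      · simp [dif_neg h]
    · simp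

lemma wnorm_erase {m : ℕ} (p : ι → Euc d) (z : Fin m → Euc d) (i : ι) :
    wnorm (Sum.elim p z) = wnorm (Sum.elim (fun j : {j : ι // j ≠ i} => p j.1) z) *
      Metric.infDist (p i)
        (span ℝ (range (Sum.elim (fun j : {j : ι // j ≠ i} => p j.1) z)) : Set (Euc d)) := by
  have hcomp : (Sum.elim p z) ∘ (eraseEquiv (m := m) i) =
      Sum.elim (Sum.elim (fun j : {j : ι // j ≠ i} => p j.1) z) (fun _ : Fin 1 => p i) := by
    funext s
    rcases s with (⟨j, hj⟩ | k) | u <;> rfl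
  rw [← Wedge.wnorm_comp_equiv (eraseEquiv (m := m) i) (Sum.elim p z), hcomp, wnorm_elim_single]

lemma abs_infDist_sub (S : Set (Euc d)) (α β : Euc d) :
    |Metric.infDist α S - Metric.infDist β S| ≤ ‖α - β‖ := by
  rw [abs_sub_le_iff]
  constructor
  · have := Metric.infDist_le_infDist_add_dist (x := α) (y := β) (s := S)
    rw [dist_eq_norm] at this; linarith
  · have := Metric.infDist_le_infDist_add_dist (x := β) (y := α) (s := S)
    rw [dist_eq_norm, norm_sub_rev] at this; linarith

lemma wnorm_update_diff {m : ℕ} (q : ι → Euc d) (z : Fin m → Euc d) (i : ι) (α β : Euc d) :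
    |wnorm (Sum.elim (Function.update q i α) z) - wnorm (Sum.elim (Function.update q i β) z)| ≤
      ‖α - β‖ * wnorm (Sum.elim (fun j : {j : ι // j ≠ i} => q j.1) z) := by
  have hres : ∀ γ : Euc d,
      (fun j : {j : ι // j ≠ i} => (Function.update q i γ) j.1) = fun j => q j.1 := by
    intro γ; funext j; exact Function.update_of_ne j.2 _ _
  have hα := wnorm_erase (Function.update q i α) z i
  have hβ := wnorm_erase (Function.update q i β) z i
  rw [hres, Function.update_self] at hα hβ
  set Q := Sum.elim (fun j : {j : ι // j ≠ i} => q j.1) z with hQ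
  rw [hα, hβ, ← mul_sub, abs_mul, abs_of_nonneg (Wedge.wnorm_nonneg Q), mul_comm]
  exact mul_le_mul_of_nonneg_right (abs_infDist_sub _ _ _) (Wedge.wnorm_nonneg Q)

lemma wnorm_telescope {m : ℕ} (x y : ι → Euc d) (z : Fin m → Euc d)
    (hx : ∀ i, ‖x i‖ ≤ 1) (hy : ∀ i, ‖y i‖ ≤ 1) :
    |wnorm (Sum.elim x z) - wnorm (Sum.elim y z)| ≤ (∑ i, ‖x i - y i‖) * wnorm z := by
  have claim : ∀ s : Finset ι,
      |wnorm (Sum.elim (s.piecewise x y) z) - wnorm (Sum.elim y z)| ≤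
        (∑ i ∈ s, ‖x i - y i‖) * wnorm z := by
    intro s
    induction s using Finset.induction_on with
    | empty => simp
    | @insert a s ha ih =>
      set q := s.piecewise x y with hq
      have hnq : ∀ j, ‖q j‖ ≤ 1 := by
        intro j
        by_cases hj : j ∈ s
        · rw [hq, Finset.piecewise_eq_of_mem _ _ _ hj]; exact hx j
        · rw [hq, Finset.piecewise_eq_of_notMem _ _ _ hj]; exact hy j
      have h1 : (insert a s).piecewise x y = Function.update q a (x a) :=
        Finset.piecewise_insert _ _ _ _
      have h2 : Function.update q a (y a) = q := by
        have hqa : y a = q a := (Finset.piecewise_eq_of_notMem _ _ _ ha).symm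
        rw [hqa, Function.update_eq_self]
      have step : |wnorm (Sum.elim ((insert a s).piecewise x y) z) - wnorm (Sum.elim q z)| ≤
          ‖x a - y a‖ * wnorm z := by
        rw [h1]
        nth_rewrite 2 [← h2]
        refine le_trans (wnorm_update_diff q z a (x a) (y a)) ?_
        have hF : wnorm (Sum.elim (fun j : {j : ι // j ≠ a} => q j.1) z) ≤ wnorm z := by
          refine le_trans (wnorm_elim_le _ z) ?_
          have hprod : wnorm (fun j : {j : ι // j ≠ a} => q j.1) ≤ 1 :=
            le_trans (wnorm_le_prod _) (Finset.prod_le_one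
              (fun j _ => norm_nonneg _) (fun j _ => hnq j.1))
          nth_rewrite 2 [show wnorm z = 1 * wnorm z by rw [one_mul]]
          exact mul_le_mul_of_nonneg_right hprod (Wedge.wnorm_nonneg z)
        exact mul_le_mul_of_nonneg_left hF (norm_nonneg _)
      calc |wnorm (Sum.elim ((insert a s).piecewise x y) z) - wnorm (Sum.elim y z)|
          ≤ |wnorm (Sum.elim ((insert a s).piecewise x y) z) - wnorm (Sum.elim q z)| +
            |wnorm (Sum.elim q z) - wnorm (Sum.elim y z)| := abs_sub_le _ _ _
        _ ≤ ‖x a - y a‖ * wnorm z + (∑ i ∈ s, ‖x i - y i‖) * wnorm z := add_le_add step ih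
        _ = (∑ i ∈ insert a s, ‖x i - y i‖) * wnorm z := by
            rw [Finset.sum_insert ha]; ring
  have := claim Finset.univ
  rwa [Finset.piecewise_univ] at this

end ChunkD

section ChunkE
variable {d : ℕ} {ι κ : Type*} [Fintype ι] [DecidableEq ι] [Fintype κ] [DecidableEq κ]
open Submodule Metric Set

lemma wnorm_pos {x : ι → Euc d} (hx : LinearIndependent ℝ x) : 0 < wnorm x := by
  have hpd : (Wedge.gram x).PosDef := by
    refine Matrix.posDef_iff_dotProduct_mulVec.mpr ⟨(Wedge.gram_posSemidef x).1, fun c hc => ?_⟩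
    rw [show (star c : ι → ℝ) = c from rfl, Wedge.gram_dot]
    have hne : ∑ i, c i • x i ≠ 0 := by
      intro h0
      exact hc (funext fun i => Fintype.linearIndependent_iff.mp hx c h0 i)
    exact pow_pos (norm_pos_iff.mpr hne) 2
  rw [Wedge.wnorm_eq, Real.sqrt_pos]
  exact hpd.det_pos

lemma wnorm_append {r m : ℕ} (v : Fin r → Euc d) (w : Fin m → Euc d) :
    wnorm (Fin.append v w) = wnorm (Sum.elim v w) := by
  have hcomp : Fin.append v w ∘ finSumFinEquiv = Sum.elim v w := by
    funext s
    rcases s with i | j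
    · simp [finSumFinEquiv, Fin.append_left]
    · simp [finSumFinEquiv, Fin.append_right]
  rw [← Wedge.wnorm_comp_equiv finSumFinEquiv (Fin.append v w), hcomp]

lemma wnorm_elim_of_span {v e : ι → Euc d} {w : κ → Euc d}
    (he : Orthonormal ℝ e) (hve : ∀ i, v i ∈ span ℝ (range e)) :
    wnorm (Sum.elim v w) = wnorm v * wnorm (Sum.elim e w) := by
  choose A hA using fun i => (mem_span_range_iff_exists_fun ℝ).mp (hve i)
  have h1 : wnorm v = |(Matrix.of A).det| := by
    have := Wedge.wnorm_map (Matrix.of A) e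
    rw [wnorm_orthonormal he, mul_one] at this
    rw [← this]
    congr 1
    funext i
    exact (hA i).symm
  set B : Matrix (ι ⊕ κ) (ι ⊕ κ) ℝ := Matrix.fromBlocks (Matrix.of A) 0 0 1 with hB
  have h2 : (fun j => ∑ k, B j k • (Sum.elim e w) k) = Sum.elim v w := by
    funext j
    rcases j with i | j
    · simp only [hB, Fintype.sum_sum_type, Sum.elim_inl, Sum.elim_inr,
        Matrix.fromBlocks_apply₁₁, Matrix.fromBlocks_apply₁₂, Matrix.of_apply,
        Matrix.zero_apply, zero_smul, Finset.sum_const_zero, add_zero]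
      exact hA i
    · simp [hB, Fintype.sum_sum_type, Matrix.one_apply, ite_smul, Finset.sum_ite_eq]
  have h3 := Wedge.wnorm_map B (Sum.elim e w)
  rw [h2] at h3
  rw [h3, hB, Matrix.det_fromBlocks_zero₁₂, Matrix.det_one, mul_one, h1]

lemma norm_orthProj_le (U : Submodule ℝ (Euc d)) (a : Euc d) :
    ‖(orthogonalProjection U a : Euc d)‖ ≤ ‖a‖ := by
  have h1 : ‖(orthogonalProjection U a : Euc d)‖ = ‖orthogonalProjection U a‖ := rfl
  calc ‖(orthogonalProjection U a : Euc d)‖ = ‖orthogonalProjection U a‖ := rfl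
    _ ≤ ‖orthogonalProjection U‖ * ‖a‖ := (orthogonalProjection U).le_opNorm a
    _ ≤ 1 * ‖a‖ := by
        exact mul_le_mul_of_nonneg_right (orthogonalProjection_norm_le U) (norm_nonneg a)
    _ = ‖a‖ := one_mul _
end ChunkE

open Submodule Metric Set

/-- `d_H(V, V') = sup` over unit vectors `v ∈ V` of `dist(v, V')`. -/
def dH {d : ℕ} (V V' : Submodule ℝ (Euc d)) : ℝ :=
  sSup {c | ∃ v ∈ V, ‖v‖ = 1 ∧ c = Metric.infDist v (V' : Set (Euc d))}

theorem stmt4 {d r : ℕ} (hrd : r ≤ d) (V V' W : Submodule ℝ (Euc d))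
    (v v' : Fin r → Euc d) (w : Fin (d - r) → Euc d)
    (hv : LinearIndependent ℝ v) (hv' : LinearIndependent ℝ v') (hw : LinearIndependent ℝ w)
    (hvV : Submodule.span ℝ (Set.range v) = V)
    (hv'V' : Submodule.span ℝ (Set.range v') = V')
    (hwW : Submodule.span ℝ (Set.range w) = W) :
    |wnorm (Fin.append v w) / (wnorm v * wnorm w) -
        wnorm (Fin.append v' w) / (wnorm v' * wnorm w)| ≤ 2 * r * dH V V' := by
  classical
  set δ := dH V V' with hδdef
  have hδ0 : 0 ≤ δ := Real.sSup_nonneg fun c hc => by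
    obtain ⟨u, hu, h1, rfl⟩ := hc; exact Metric.infDist_nonneg
  have hbdd : BddAbove {c | ∃ u ∈ V, ‖u‖ = 1 ∧ c = Metric.infDist u (V' : Set (Euc d))} := by
    refine ⟨1, fun c hc => ?_⟩
    obtain ⟨u, hu, h1, rfl⟩ := hc
    calc Metric.infDist u (V' : Set (Euc d)) ≤ dist u 0 :=
          Metric.infDist_le_dist_of_mem (Submodule.zero_mem V')
      _ = 1 := by rw [dist_zero_right, h1]
  have hδle : ∀ u ∈ V, ‖u‖ = 1 → Metric.infDist u (V' : Set (Euc d)) ≤ δ := fun u hu h1 =>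
    le_csSup hbdd ⟨u, hu, h1, rfl⟩
  have hrV : Module.finrank ℝ V = r := by
    rw [← hvV, finrank_span_eq_card hv, Fintype.card_fin]
  have hrV' : Module.finrank ℝ V' = r := by
    rw [← hv'V', finrank_span_eq_card hv', Fintype.card_fin]
  set bV := (stdOrthonormalBasis ℝ V).reindex (finCongr hrV) with hbV
  set bV' := (stdOrthonormalBasis ℝ V').reindex (finCongr hrV') with hbV'
  set e : Fin r → Euc d := fun i => (bV i : Euc d) with he
  set e' : Fin r → Euc d := fun i => (bV' i : Euc d) with he'
  have he_on : Orthonormal ℝ e := bV.orthonormal.comp_linearIsometry V.subtypeₗᵢ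
  have he'_on : Orthonormal ℝ e' := bV'.orthonormal.comp_linearIsometry V'.subtypeₗᵢ
  have he_span : span ℝ (range e) = V := by
    have h1 : range e = V.subtype '' (range bV) := by rw [← Set.range_comp]; rfl
    rw [h1, Submodule.span_image,
      show Set.range (⇑bV) = Set.range ⇑bV.toBasis by rw [bV.coe_toBasis],
      Module.Basis.span_eq, Submodule.map_subtype_top]
  have he'_span : span ℝ (range e') = V' := by
    have h1 : range e' = V'.subtype '' (range bV') := by rw [← Set.range_comp]; rfl
    rw [h1, Submodule.span_image,
      show Set.range (⇑bV') = Set.range ⇑bV'.toBasis by rw [bV'.coe_toBasis],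
      Module.Basis.span_eq, Submodule.map_subtype_top]
  have he_mem : ∀ i, e i ∈ V := fun i => (bV i).2
  have he_norm : ∀ i, ‖e i‖ = 1 := fun i => he_on.1 i
  set u : Fin r → Euc d := fun i => (orthogonalProjection V' (e i) : Euc d) with hu
  have hu_mem : ∀ i, u i ∈ V' := fun i => (orthogonalProjection V' (e i)).2
  have hu_norm : ∀ i, ‖u i‖ ≤ 1 := fun i =>
    le_trans (norm_orthProj_le V' (e i)) (le_of_eq (he_norm i))
  have hdu : ∀ i, ‖e i - u i‖ ≤ δ := fun i => by
    have h1 : ‖e i - u i‖ = Metric.infDist (e i) (V' : Set (Euc d)) :=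
      (infDist_orth V' (e i)).symm
    rw [h1]; exact hδle (e i) (he_mem i) (he_norm i)
  have hS : (∑ i, ‖e i - u i‖) ≤ r * δ := by
    calc (∑ i : Fin r, ‖e i - u i‖) ≤ ∑ _i : Fin r, δ := Finset.sum_le_sum fun i _ => hdu i
      _ = r * δ := by rw [Finset.sum_const, Finset.card_univ, Fintype.card_fin, nsmul_eq_mul]
  set n := wnorm w with hn_def
  have hn : 0 < n := wnorm_pos hw
  set A := wnorm (Sum.elim e w) with hA
  set A' := wnorm (Sum.elim e' w) with hA'
  have hA'n : A' ≤ n := by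
    have h := wnorm_elim_le e' w
    rwa [wnorm_orthonormal he'_on, one_mul] at h
  have hA'0 : 0 ≤ A' := Wedge.wnorm_nonneg _
  have hT1 : |A - wnorm (Sum.elim u w)| ≤ (r * δ) * n := by
    refine le_trans (wnorm_telescope e u w (fun i => le_of_eq (he_norm i)) hu_norm) ?_
    exact mul_le_mul_of_nonneg_right hS (Wedge.wnorm_nonneg w)
  have hT2 : |1 - wnorm u| ≤ r * δ := by
    have h := wnorm_telescope e u (fun i : Fin 0 => i.elim0)
      (fun i => le_of_eq (he_norm i)) hu_norm
    rw [wnorm_elim_isEmpty e (fun i : Fin 0 => i.elim0),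
      wnorm_elim_isEmpty u (fun i : Fin 0 => i.elim0),
      wnorm_empty (fun i : Fin 0 => i.elim0), mul_one,
      wnorm_orthonormal he_on] at h
    exact le_trans h hS
  have hWu : wnorm (Sum.elim u w) = wnorm u * A' :=
    wnorm_elim_of_span he'_on (fun i => by rw [he'_span]; exact hu_mem i)
  have hWv : wnorm (Sum.elim v w) = wnorm v * A :=
    wnorm_elim_of_span he_on (fun i => by
      rw [he_span, ← hvV]; exact Submodule.subset_span (Set.mem_range_self i))
  have hWv' : wnorm (Sum.elim v' w) = wnorm v' * A' :=
    wnorm_elim_of_span he'_on (fun i => by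
      rw [he'_span, ← hv'V']; exact Submodule.subset_span (Set.mem_range_self i))
  have hv0 : wnorm v ≠ 0 := ne_of_gt (wnorm_pos hv)
  have hv'0 : wnorm v' ≠ 0 := ne_of_gt (wnorm_pos hv')
  rw [wnorm_append, wnorm_append, hWv, hWv', mul_div_mul_left A n hv0,
    mul_div_mul_left A' n hv'0]
  have hkey : |A - A'| ≤ 2 * r * δ * n := by
    have h1 : |A - A'| ≤ |A - wnorm (Sum.elim u w)| + |wnorm (Sum.elim u w) - A'| :=
      abs_sub_le _ _ _
    have h2 : |wnorm (Sum.elim u w) - A'| = |wnorm u - 1| * A' := by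
      rw [hWu, show wnorm u * A' - A' = (wnorm u - 1) * A' by ring, abs_mul,
        abs_of_nonneg hA'0]
    have h3 : |wnorm u - 1| * A' ≤ (r * δ) * n := by
      apply mul_le_mul ?_ hA'n hA'0 (by positivity)
      rw [abs_sub_comm]; exact hT2
    calc |A - A'| ≤ |A - wnorm (Sum.elim u w)| + |wnorm (Sum.elim u w) - A'| := h1
      _ ≤ (r * δ) * n + (r * δ) * n := by rw [h2]; exact add_le_add hT1 h3
      _ = 2 * r * δ * n := by ring
  rw [div_sub_div_same, abs_div, abs_of_pos hn, div_le_iff₀ hn]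
  exact hkey
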